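/- Hourglass internal force from the stability functional (discrete form of Eq. (42)): in the discrete nonlocal setting, suppose each point i ∈ I carries weights ω_i : S(i) → ℝ, monomial vectors p_i : S(i) → ℝ^m with invertible Gram matrix A_i := ∑_{j∈S(i)} ω_i(j)·p_i(j)·p_i(j)ᵀ·V(j), a penalty constant c_i > 0, and for a field u : I → ℝ define a*_i(u) := A_i⁻¹·(∑_{j∈S(i)} ω_i(j)·(u(j)−u(i))·p_i(j)·V(j)) and the total hourglass energy 𝓕(u) := ∑_{i∈I} (c_i/2)·∑_{j∈S(i)} ω_i(j)·( u(j) − u(i) − ⟪p_i(j), a*_i(u)⟫ )²·V(j)·V(i). Then 𝓕 is differentiable and for every variation δ : I → ℝ, (d/dt)𝓕(u + t·δ)|_{t=0} = ∑_{i∈I} ( ∑_{j∈S'(i)} ω_j(i)·c_j·( u(i) − u(j) − ⟪p_j(i), a*_j(u)⟫ )·V(j) − ∑_{j∈S(i)} ω_i(j)·c_i·( u(j) − u(i) − ⟪p_i(j), a*_i(u)⟫ )·V(j) )·δ(i)·V(i). -/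

import Mathlib

open Finset Matrix

/-- Hourglass internal force from the stability functional (discrete form of Eq. (42)). -/
theorem hourglass_internal_force {I : Type*} [Fintype I] [DecidableEq I] {m : ℕ}
    (V : I → ℝ) (S : I → Finset I)
    (ω : I → I → ℝ) (p : I → I → Fin m → ℝ)
    (A : I → Matrix (Fin m) (Fin m) ℝ)
    (hA : ∀ i, A i = ∑ j ∈ S i, (ω i j * V j) • vecMulVec (p i j) (p i j))
    (hInv : ∀ i, IsUnit (A i).det)
    (c : I → ℝ) (hc : ∀ i, 0 < c i)
    (aStar : (I → ℝ) → I → Fin m → ℝ)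
    (haStar : ∀ u i, aStar u i = (A i)⁻¹ *ᵥ (∑ j ∈ S i, (ω i j * (u j - u i) * V j) • p i j))
    (F : (I → ℝ) → ℝ)
    (hF : ∀ u, F u = ∑ i, (c i / 2) *
        (∑ j ∈ S i, ω i j * (u j - u i - p i j ⬝ᵥ aStar u i) ^ 2 * V j) * V i) :
    Differentiable ℝ F ∧
      ∀ u δ : I → ℝ,
        HasDerivAt (fun t : ℝ => F (u + t • δ))
          (∑ i, ((∑ j ∈ univ.filter (fun j => i ∈ S j),
                ω j i * c j * (u i - u j - p j i ⬝ᵥ aStar u j) * V j)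
              - ∑ j ∈ S i, ω i j * c i * (u j - u i - p i j ⬝ᵥ aStar u i) * V j)
            * δ i * V i) 0 := by
  classical
  -- evaluation maps are differentiable
  have hev : ∀ j : I, Differentiable ℝ (fun u : I → ℝ => u j) := fun j =>
    differentiable_pi.mp differentiable_id j
  -- the map u ↦ p i j ⬝ᵥ aStar u i is differentiable
  have hdp : ∀ (i j : I), Differentiable ℝ (fun u : I → ℝ => p i j ⬝ᵥ aStar u i) := by
    intro i j
    have he : (fun u : I → ℝ => p i j ⬝ᵥ aStar u i)
        = fun u => ∑ k, p i j k * ∑ l, (A i)⁻¹ k l *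
            ∑ j' ∈ S i, ω i j' * (u j' - u i) * V j' * p i j' l := by
      funext u
      rw [haStar]
      simp [dotProduct, mulVec, Finset.sum_apply, Pi.smul_apply, smul_eq_mul]
    rw [he]
    refine Differentiable.fun_sum fun k _ => Differentiable.const_mul ?_ _
    refine Differentiable.fun_sum fun l _ => Differentiable.const_mul ?_ _
    exact Differentiable.fun_sum fun j' _ =>
      ((((hev j').sub (hev i)).const_mul _).mul_const _).mul_const _
  -- differentiability of F
  have hFdiff : Differentiable ℝ F := by
    have hFe : F = fun u => ∑ i, (c i / 2) *
        (∑ j ∈ S i, ω i j * (u j - u i - p i j ⬝ᵥ aStar u i) ^ 2 * V j) * V i := funext hF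
    rw [hFe]
    refine Differentiable.fun_sum fun i _ => Differentiable.mul_const ?_ _
    refine Differentiable.const_mul ?_ _
    refine Differentiable.fun_sum fun j _ => Differentiable.mul_const ?_ _
    exact Differentiable.const_mul ((((hev j).sub (hev i)).sub (hdp i j)).pow 2) _
  -- normal equations
  have hnorm : ∀ (u : I → ℝ) (i : I),
      ∑ j ∈ S i, (ω i j * (u j - u i - p i j ⬝ᵥ aStar u i) * V j) • p i j = 0 := by
    intro u i
    have hAx : A i *ᵥ aStar u i = ∑ j ∈ S i, (ω i j * (u j - u i) * V j) • p i j := by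
      rw [haStar, mulVec_mulVec, Matrix.mul_nonsing_inv _ (hInv i), one_mulVec]
    have hAx2 : A i *ᵥ aStar u i
        = ∑ j ∈ S i, (ω i j * (p i j ⬝ᵥ aStar u i) * V j) • p i j := by
      funext k
      simp only [hA, mulVec, dotProduct, Finset.sum_apply, Matrix.sum_apply,
        Matrix.smul_apply, vecMulVec_apply, smul_eq_mul, Pi.smul_apply,
        Finset.sum_mul, Finset.mul_sum]
      rw [Finset.sum_comm]
      exact Finset.sum_congr rfl fun j _ => Finset.sum_congr rfl fun l _ => by ring
    calc ∑ j ∈ S i, (ω i j * (u j - u i - p i j ⬝ᵥ aStar u i) * V j) • p i j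
        = ∑ j ∈ S i, ((ω i j * (u j - u i) * V j) • p i j
            - (ω i j * (p i j ⬝ᵥ aStar u i) * V j) • p i j) := by
          refine Finset.sum_congr rfl fun j _ => ?_
          rw [← sub_smul]; congr 1; ring
      _ = 0 := by
          rw [Finset.sum_sub_distrib, ← hAx, ← hAx2, sub_self]
  refine ⟨hFdiff, fun u δ => ?_⟩
  -- linearity of aStar
  have hlin : ∀ (t : ℝ) (i : I), aStar (u + t • δ) i = aStar u i + t • aStar δ i := by
    intro t i
    rw [haStar, haStar, haStar]
    have hv : (∑ j ∈ S i, (ω i j * ((u + t • δ) j - (u + t • δ) i) * V j) • p i j)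
        = (∑ j ∈ S i, (ω i j * (u j - u i) * V j) • p i j)
          + t • (∑ j ∈ S i, (ω i j * (δ j - δ i) * V j) • p i j) := by
      rw [Finset.smul_sum, ← Finset.sum_add_distrib]
      refine Finset.sum_congr rfl fun j _ => ?_
      rw [smul_smul, ← add_smul]
      congr 1
      simp only [Pi.add_apply, Pi.smul_apply, smul_eq_mul]
      ring
    rw [hv, mulVec_add, mulVec_smul]
  -- the perturbed residual
  have hbase : ∀ (t : ℝ) (i j : I),
      (u + t • δ) j - (u + t • δ) i - p i j ⬝ᵥ aStar (u + t • δ) i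
        = (u j - u i - p i j ⬝ᵥ aStar u i)
          + t * (δ j - δ i - p i j ⬝ᵥ aStar δ i) := by
    intro t i j
    rw [hlin]
    simp only [Pi.add_apply, Pi.smul_apply, smul_eq_mul, dotProduct_add, dotProduct_smul]
    ring
  have hkey : (fun t : ℝ => F (u + t • δ)) = fun t => ∑ i, (c i / 2) *
      (∑ j ∈ S i, ω i j * ((u j - u i - p i j ⬝ᵥ aStar u i)
        + t * (δ j - δ i - p i j ⬝ᵥ aStar δ i)) ^ 2 * V j) * V i := by
    funext t
    rw [hF]
    refine Finset.sum_congr rfl fun i _ => ?_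
    have h : ∀ j ∈ S i, ω i j * ((u + t • δ) j - (u + t • δ) i
          - p i j ⬝ᵥ aStar (u + t • δ) i) ^ 2 * V j
        = ω i j * ((u j - u i - p i j ⬝ᵥ aStar u i)
          + t * (δ j - δ i - p i j ⬝ᵥ aStar δ i)) ^ 2 * V j := fun j _ => by
      rw [hbase t i j]
    rw [Finset.sum_congr rfl h]
  rw [hkey]
  -- the derivative of the explicit quadratic
  have hD : HasDerivAt (fun t : ℝ => ∑ i, (c i / 2) *
      (∑ j ∈ S i, ω i j * ((u j - u i - p i j ⬝ᵥ aStar u i)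
        + t * (δ j - δ i - p i j ⬝ᵥ aStar δ i)) ^ 2 * V j) * V i)
      (∑ i, (c i / 2) * (∑ j ∈ S i, ω i j * (2 * (u j - u i - p i j ⬝ᵥ aStar u i)
        * (δ j - δ i - p i j ⬝ᵥ aStar δ i)) * V j) * V i) 0 := by
    refine HasDerivAt.fun_sum fun i _ => ?_
    refine HasDerivAt.mul_const (HasDerivAt.const_mul _ ?_) _
    refine HasDerivAt.fun_sum fun j _ => ?_
    refine HasDerivAt.mul_const (HasDerivAt.const_mul _ ?_) _
    have h1 : HasDerivAt (fun t : ℝ => (u j - u i - p i j ⬝ᵥ aStar u i)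
        + t * (δ j - δ i - p i j ⬝ᵥ aStar δ i))
        (δ j - δ i - p i j ⬝ᵥ aStar δ i) 0 := by
      simpa using ((hasDerivAt_id (0:ℝ)).mul_const
        (δ j - δ i - p i j ⬝ᵥ aStar δ i)).const_add (u j - u i - p i j ⬝ᵥ aStar u i)
    have h2 := h1.fun_pow 2
    norm_num at h2
    convert h2 using 1
    all_goals ring
  convert hD using 1
  -- the algebraic identity
  have hzero : ∀ i, ∑ j ∈ S i, ω i j * (u j - u i - p i j ⬝ᵥ aStar u i)
      * (p i j ⬝ᵥ aStar δ i) * V j = 0 := by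
    intro i
    have h0 : (∑ j ∈ S i, (ω i j * (u j - u i - p i j ⬝ᵥ aStar u i) * V j) • p i j)
        ⬝ᵥ aStar δ i = 0 := by rw [hnorm u i, zero_dotProduct]
    rw [← h0]
    simp only [dotProduct, Finset.sum_apply, Pi.smul_apply, smul_eq_mul,
      Finset.sum_mul, Finset.mul_sum]
    rw [Finset.sum_comm]
    exact Finset.sum_congr rfl fun j _ => Finset.sum_congr rfl fun k _ => by ring
  -- swap of summation order
  have hswap : ∀ f : I → I → ℝ, ∑ i, ∑ j ∈ S i, f i j
      = ∑ i, ∑ j ∈ univ.filter (fun j => i ∈ S j), f j i := by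
    intro f
    calc ∑ i, ∑ j ∈ S i, f i j
        = ∑ i, ∑ j, if j ∈ S i then f i j else 0 := by
          refine Finset.sum_congr rfl fun i _ => ?_
          rw [Finset.sum_ite_mem, Finset.univ_inter]
      _ = ∑ j, ∑ i, if j ∈ S i then f i j else 0 := Finset.sum_comm
      _ = ∑ j, ∑ i ∈ univ.filter (fun i => j ∈ S i), f i j := by
          exact Finset.sum_congr rfl fun j _ => (Finset.sum_filter _ _).symm
  -- per-i rearrangement of the derivative
  have hstep : ∀ i, (c i / 2) * (∑ j ∈ S i, ω i j * (2 * (u j - u i - p i j ⬝ᵥ aStar u i)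
        * (δ j - δ i - p i j ⬝ᵥ aStar δ i)) * V j) * V i
      = (∑ j ∈ S i, ω i j * c i * (u j - u i - p i j ⬝ᵥ aStar u i) * V i * δ j * V j)
        - (∑ j ∈ S i, ω i j * c i * (u j - u i - p i j ⬝ᵥ aStar u i) * V j) * δ i * V i
        - (c i * V i) * ∑ j ∈ S i, ω i j * (u j - u i - p i j ⬝ᵥ aStar u i)
            * (p i j ⬝ᵥ aStar δ i) * V j := by
    intro i
    rw [Finset.mul_sum, Finset.sum_mul, Finset.sum_mul, Finset.sum_mul, Finset.mul_sum,
      ← Finset.sum_sub_distrib, ← Finset.sum_sub_distrib]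
    exact Finset.sum_congr rfl fun j _ => by ring
  calc ∑ i, ((∑ j ∈ univ.filter (fun j => i ∈ S j),
          ω j i * c j * (u i - u j - p j i ⬝ᵥ aStar u j) * V j)
        - ∑ j ∈ S i, ω i j * c i * (u j - u i - p i j ⬝ᵥ aStar u i) * V j) * δ i * V i
      = ∑ i, ((∑ j ∈ univ.filter (fun j => i ∈ S j),
          ω j i * c j * (u i - u j - p j i ⬝ᵥ aStar u j) * V i * δ i * V j)
        - (∑ j ∈ S i, ω i j * c i * (u j - u i - p i j ⬝ᵥ aStar u i) * V j) * δ i * V i) := by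
        refine Finset.sum_congr rfl fun i _ => ?_
        rw [sub_mul, sub_mul, Finset.sum_mul, Finset.sum_mul]
        congr 1
        exact Finset.sum_congr rfl fun j _ => by ring
    _ = (∑ i, ∑ j ∈ univ.filter (fun j => i ∈ S j),
          ω j i * c j * (u i - u j - p j i ⬝ᵥ aStar u j) * V i * δ i * V j)
        - ∑ i, (∑ j ∈ S i, ω i j * c i * (u j - u i - p i j ⬝ᵥ aStar u i) * V j)
          * δ i * V i := Finset.sum_sub_distrib _ _
    _ = (∑ i, ∑ j ∈ S i, ω i j * c i * (u j - u i - p i j ⬝ᵥ aStar u i) * V j * δ j * V i)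
        - ∑ i, (∑ j ∈ S i, ω i j * c i * (u j - u i - p i j ⬝ᵥ aStar u i) * V j)
          * δ i * V i := by
        rw [hswap (fun i j => ω i j * c i * (u j - u i - p i j ⬝ᵥ aStar u i) * V j * δ j * V i)]
    _ = ∑ i, (c i / 2) * (∑ j ∈ S i, ω i j * (2 * (u j - u i - p i j ⬝ᵥ aStar u i)
          * (δ j - δ i - p i j ⬝ᵥ aStar δ i)) * V j) * V i := by
        rw [← Finset.sum_sub_distrib]
        refine Finset.sum_congr rfl fun i _ => ?_
        rw [hstep i, hzero i, mul_zero, sub_zero]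
        congr 1
        exact Finset.sum_congr rfl fun j _ => by ring
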